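/- For every real ε > 0 there exists an integer K such that for all integers k ≥ K, all integers j with 1 ≤ j ≤ k−1, and all real numbers x with 0 < x < 1, one has binom(k,j)·x^j·(1−x)^{k−j} ≤ 1/e + ε. -/

import Mathlib

open Real

private lemma amgm14 (j m : ℕ) (hj : 1 ≤ j) (hm : 1 ≤ m) (x : ℝ) (hx0 : 0 < x) (hx1 : x < 1) :
    x ^ j * (1 - x) ^ m ≤
      ((j : ℝ) / ((j : ℝ) + (m : ℝ))) ^ j * ((m : ℝ) / ((j : ℝ) + (m : ℝ))) ^ m := by
  have hJ : (0:ℝ) < j := by exact_mod_cast hj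
  have hM : (0:ℝ) < m := by exact_mod_cast hm
  have hS : (0:ℝ) < (j : ℝ) + m := by positivity
  set S : ℝ := (j : ℝ) + m with hSdef
  set w1 : ℝ := j / S with hw1
  set w2 : ℝ := m / S with hw2
  set p1 : ℝ := x * S / j with hp1
  set p2 : ℝ := (1 - x) * S / m with hp2
  have hx1' : (0:ℝ) < 1 - x := by linarith
  have hw1p : 0 ≤ w1 := by positivity
  have hw2p : 0 ≤ w2 := by positivity
  have hp1p : (0:ℝ) < p1 := by positivity
  have hp2p : (0:ℝ) < p2 := by positivity
  have hwsum : w1 + w2 = 1 := by rw [hw1, hw2]; field_simp; rw [hSdef]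
  have h := Real.geom_mean_le_arith_mean2_weighted hw1p hw2p hp1p.le hp2p.le hwsum
  have harith : w1 * p1 + w2 * p2 = 1 := by
    rw [hw1, hw2, hp1, hp2]; field_simp; ring
  rw [harith] at h
  have hkey : p1 ^ j * p2 ^ m ≤ 1 := by
    have h2 : (p1 ^ w1 * p2 ^ w2) ^ (j + m) ≤ 1 :=
      pow_le_one₀ (by positivity) h
    rwa [mul_pow, ← Real.rpow_natCast (p1 ^ w1) (j + m),
      ← Real.rpow_natCast (p2 ^ w2) (j + m),
      ← Real.rpow_mul hp1p.le, ← Real.rpow_mul hp2p.le,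
      show w1 * ((j + m : ℕ) : ℝ) = (j : ℝ) by
        rw [hw1]; push_cast [hSdef]; field_simp,
      show w2 * ((j + m : ℕ) : ℝ) = (m : ℝ) by
        rw [hw2]; push_cast [hSdef]; field_simp,
      Real.rpow_natCast, Real.rpow_natCast] at h2
  have hxw : x = w1 * p1 := by rw [hw1, hp1]; field_simp
  have hxw2 : 1 - x = w2 * p2 := by rw [hw2, hp2]; field_simp
  calc x ^ j * (1 - x) ^ m = (w1 ^ j * w2 ^ m) * (p1 ^ j * p2 ^ m) := by
        rw [hxw2, hxw, mul_pow, mul_pow]; ring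
    _ ≤ (w1 ^ j * w2 ^ m) * 1 := by
        apply mul_le_mul_of_nonneg_left hkey (by positivity)
    _ = w1 ^ j * w2 ^ m := by ring

private lemma stir_lower14 (n : ℕ) (hn : 1 ≤ n) :
    Real.sqrt π * (Real.sqrt (2 * n) * ((n : ℝ) / Real.exp 1) ^ n) ≤ (n.factorial : ℝ) := by
  have hlb : Real.sqrt π ≤ Stirling.stirlingSeq n := by
    obtain ⟨p, rfl⟩ := Nat.exists_eq_add_of_le hn
    have := Stirling.stirlingSeq'_antitone.le_of_tendsto
      (Stirling.tendsto_stirlingSeq_sqrt_pi.comp (Filter.tendsto_add_atTop_nat 1)) p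
    simpa [Function.comp, Nat.succ_eq_add_one, Nat.add_comm] using this
  have hD : 0 < Real.sqrt (2 * n) * ((n : ℝ) / Real.exp 1) ^ n := by
    have : (0:ℝ) < n := by exact_mod_cast hn
    positivity
  have := mul_le_mul_of_nonneg_right hlb hD.le
  rwa [Stirling.stirlingSeq, div_mul_cancel₀ _ hD.ne'] at this

private lemma stir_upper14 (n : ℕ) (hn : 1 ≤ n) :
    (n.factorial : ℝ) ≤ Real.exp 1 / Real.sqrt 2 * (Real.sqrt (2 * n) * ((n : ℝ) / Real.exp 1) ^ n) := by
  have hub : Stirling.stirlingSeq n ≤ Real.exp 1 / Real.sqrt 2 := by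
    obtain ⟨p, rfl⟩ := Nat.exists_eq_add_of_le hn
    have := Stirling.stirlingSeq'_antitone (Nat.zero_le p)
    simpa [Function.comp, Nat.succ_eq_add_one, Nat.add_comm, Stirling.stirlingSeq_one] using this
  have hD : 0 < Real.sqrt (2 * n) * ((n : ℝ) / Real.exp 1) ^ n := by
    have : (0:ℝ) < n := by exact_mod_cast hn
    positivity
  have := mul_le_mul_of_nonneg_right hub hD.le
  rwa [Stirling.stirlingSeq, div_mul_cancel₀ _ hD.ne'] at this

private lemma M_bound14 (j m : ℕ) (hj : 1 ≤ j) (hm : 1 ≤ m) :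
    ((j + m).choose j : ℝ) * ((j : ℝ) / ((j : ℝ) + (m : ℝ))) ^ j *
        ((m : ℝ) / ((j : ℝ) + (m : ℝ))) ^ m ≤
      Real.exp 1 / (Real.sqrt 2 * π) *
        (Real.sqrt (2 * ((j : ℝ) + (m : ℝ))) / (Real.sqrt (2 * (j : ℝ)) * Real.sqrt (2 * (m : ℝ)))) := by
  have hJ0 : (0:ℝ) < (j : ℝ) := by exact_mod_cast hj
  have hM0 : (0:ℝ) < (m : ℝ) := by exact_mod_cast hm
  set J : ℝ := (j : ℝ)
  set M : ℝ := (m : ℝ)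
  set S : ℝ := J + M with hSdef
  set E : ℝ := Real.exp 1 with hEdef
  have hS0 : (0:ℝ) < S := by positivity
  have hE0 : (0:ℝ) < E := Real.exp_pos 1
  have hA : (0:ℝ) < (J / E) ^ j * (M / E) ^ m := by positivity
  have hchoose : ((j + m).choose j : ℝ) =
      ((j + m).factorial : ℝ) / ((j.factorial : ℝ) * (m.factorial : ℝ)) := by
    rw [Nat.cast_choose ℝ (Nat.le_add_right j m), Nat.add_sub_cancel_left]
  have up := stir_upper14 (j + m) (by omega)
  push_cast at up
  have lo1 := stir_lower14 j hj
  have lo2 := stir_lower14 m hm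
  have h1 : (S / E) ^ j * (J / S) ^ j = (J / E) ^ j := by
    rw [← mul_pow]; congr 1; field_simp
  have h2 : (S / E) ^ m * (M / S) ^ m = (M / E) ^ m := by
    rw [← mul_pow]; congr 1; field_simp
  have hkey : (S / E) ^ (j + m) * ((J / S) ^ j * (M / S) ^ m)
      = (J / E) ^ j * (M / E) ^ m := by
    rw [pow_add, mul_mul_mul_comm, h1, h2]
  have hpp : Real.sqrt π * Real.sqrt π = π := Real.mul_self_sqrt pi_pos.le
  have hnum : E / Real.sqrt 2 * (Real.sqrt (2 * S) * (S / E) ^ (j + m)) *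
      ((J / S) ^ j * (M / S) ^ m)
      = E / Real.sqrt 2 * Real.sqrt (2 * S) * ((J / E) ^ j * (M / E) ^ m) := by
    rw [← hkey]; ring
  have hden : (Real.sqrt π * (Real.sqrt (2 * J) * (J / E) ^ j)) *
      (Real.sqrt π * (Real.sqrt (2 * M) * (M / E) ^ m))
      = π * (Real.sqrt (2 * J) * Real.sqrt (2 * M)) * ((J / E) ^ j * (M / E) ^ m) := by
    linear_combination (Real.sqrt (2 * J) * (J / E) ^ j *
      (Real.sqrt (2 * M) * (M / E) ^ m)) * hpp
  have hX : (0:ℝ) ≤ (J / S) ^ j * (M / S) ^ m := by positivity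
  calc ((j + m).choose j : ℝ) * (J / S) ^ j * (M / S) ^ m
      = ((j + m).factorial : ℝ) * ((J / S) ^ j * (M / S) ^ m) /
        ((j.factorial : ℝ) * (m.factorial : ℝ)) := by rw [hchoose]; ring
    _ ≤ (E / Real.sqrt 2 * (Real.sqrt (2 * S) * (S / E) ^ (j + m)) *
          ((J / S) ^ j * (M / S) ^ m)) /
        ((Real.sqrt π * (Real.sqrt (2 * J) * (J / E) ^ j)) *
          (Real.sqrt π * (Real.sqrt (2 * M) * (M / E) ^ m))) := by
        apply div_le_div₀ (by positivity)
          (mul_le_mul_of_nonneg_right up hX)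
          (by positivity)
          (mul_le_mul lo1 lo2 (by positivity) (by positivity))
    _ = E / (Real.sqrt 2 * π) *
        (Real.sqrt (2 * S) / (Real.sqrt (2 * J) * Real.sqrt (2 * M))) := by
        rw [hnum, hden, mul_div_mul_right _ _ hA.ne']
        rw [div_mul_div_comm]
        ring_nf

private lemma central14 (j m : ℕ) (hj : 2 ≤ j) (hm : 2 ≤ m) (hs : 12 ≤ j + m) :
    ((j + m).choose j : ℝ) * ((j : ℝ) / ((j : ℝ) + (m : ℝ))) ^ j *
        ((m : ℝ) / ((j : ℝ) + (m : ℝ))) ^ m ≤ (Real.exp 1)⁻¹ := by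
  have hJ0 : (2:ℝ) ≤ (j : ℝ) := by exact_mod_cast hj
  have hM0 : (2:ℝ) ≤ (m : ℝ) := by exact_mod_cast hm
  have hS12 : (12:ℝ) ≤ (j : ℝ) + (m : ℝ) := by exact_mod_cast hs
  set J : ℝ := (j : ℝ)
  set M : ℝ := (m : ℝ)
  have hJp : (0:ℝ) < J := by linarith
  have hMp : (0:ℝ) < M := by linarith
  have hXpos : 0 < Real.sqrt (J * M) := Real.sqrt_pos.mpr (by positivity)
  have hprod : Real.sqrt (2 * J) * Real.sqrt (2 * M) = 2 * Real.sqrt (J * M) := by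
    rw [← Real.sqrt_mul (by positivity), show (2*J)*(2*M) = 4*(J*M) by ring,
      show (4:ℝ)*(J*M) = 2^2*(J*M) by norm_num, Real.sqrt_mul (by positivity),
      Real.sqrt_sq (by norm_num)]
  have hcmp : Real.sqrt (2 * (J + M)) ≤ Real.sqrt (6/5) * Real.sqrt (J * M) := by
    rw [← Real.sqrt_mul (by norm_num)]
    apply Real.sqrt_le_sqrt
    nlinarith [mul_nonneg (sub_nonneg.mpr hJ0) (sub_nonneg.mpr hM0)]
  have hE0 : (0:ℝ) < Real.exp 1 := Real.exp_pos 1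
  calc ((j + m).choose j : ℝ) * (J / (J + M)) ^ j * (M / (J + M)) ^ m
      ≤ Real.exp 1 / (Real.sqrt 2 * π) *
        (Real.sqrt (2 * (J + M)) / (Real.sqrt (2 * J) * Real.sqrt (2 * M))) :=
        M_bound14 j m (by omega) (by omega)
    _ = Real.exp 1 / (Real.sqrt 2 * π) *
        (Real.sqrt (2 * (J + M)) / (2 * Real.sqrt (J * M))) := by rw [hprod]
    _ ≤ Real.exp 1 / (Real.sqrt 2 * π) *
        ((Real.sqrt (6/5) * Real.sqrt (J * M)) / (2 * Real.sqrt (J * M))) := by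
        gcongr
    _ = Real.exp 1 / (Real.sqrt 2 * π) * (Real.sqrt (6/5) / 2) := by
        rw [mul_div_mul_right _ _ hXpos.ne']
    _ ≤ (Real.exp 1)⁻¹ := by
        have h65 : Real.sqrt (6/5) ≤ 1.096 := by
          rw [show (1.096:ℝ) = Real.sqrt (1.096^2) from (Real.sqrt_sq (by norm_num)).symm]
          exact Real.sqrt_le_sqrt (by norm_num)
        have h2 : (1.414:ℝ) ≤ Real.sqrt 2 := by
          rw [show (1.414:ℝ) = Real.sqrt (1.414^2) from (Real.sqrt_sq (by norm_num)).symm]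
          exact Real.sqrt_le_sqrt (by norm_num)
        rw [inv_eq_one_div, div_mul_div_comm, div_le_div_iff₀ (by positivity) hE0]
        have hel : Real.exp 1 < 2.7182818286 := Real.exp_one_lt_d9
        have hpi : 3.141592 < π := Real.pi_gt_d6
        nlinarith [Real.sqrt_nonneg (6/5), Real.sqrt_nonneg 2, hE0,
          mul_pos hE0 hE0]

private lemma edge14 (m : ℕ) (hm : 1 ≤ m) :
    ((m : ℝ) / ((m : ℝ) + 1)) ^ m ≤ (Real.exp 1)⁻¹ * (1 + 1 / (m : ℝ)) := by
  have hM : (0:ℝ) < m := by exact_mod_cast hm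
  have h1 : (m : ℝ) / ((m : ℝ) + 1) ≤ Real.exp (-(1 / ((m : ℝ) + 1))) := by
    have h := Real.add_one_le_exp (-(1 / ((m : ℝ) + 1)))
    have he : (m : ℝ) / ((m : ℝ) + 1) = -(1 / ((m : ℝ) + 1)) + 1 := by field_simp; ring
    rw [he]; exact h
  have h2 : ((m : ℝ) / ((m : ℝ) + 1)) ^ (m + 1) ≤ Real.exp (-1) := by
    calc ((m : ℝ) / ((m : ℝ) + 1)) ^ (m + 1)
        ≤ (Real.exp (-(1 / ((m : ℝ) + 1)))) ^ (m + 1) :=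
          pow_le_pow_left₀ (by positivity) h1 _
      _ = Real.exp (((m : ℕ) + 1 : ℕ) * (-(1 / ((m : ℝ) + 1)))) := by
          rw [Real.exp_nat_mul]
      _ = Real.exp (-1) := by
          congr 1
          push_cast
          field_simp
  have h3 : ((m : ℝ) / ((m : ℝ) + 1)) ^ m
      = ((m : ℝ) / ((m : ℝ) + 1)) ^ (m + 1) * (((m : ℝ) + 1) / m) := by
    rw [pow_succ]; field_simp
  rw [h3]
  calc ((m : ℝ) / ((m : ℝ) + 1)) ^ (m + 1) * (((m : ℝ) + 1) / m)
      ≤ Real.exp (-1) * (((m : ℝ) + 1) / m) :=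
        mul_le_mul_of_nonneg_right h2 (by positivity)
    _ = (Real.exp 1)⁻¹ * (1 + 1 / (m : ℝ)) := by
        rw [Real.exp_neg]; congr 1; field_simp

/-- Theorem: for every real `ε > 0` there is an integer `K` such that for all integers
`k ≥ K`, all integers `j` with `1 ≤ j ≤ k-1`, and all reals `x` with `0 < x < 1`, one has
`binom(k,j)·x^j·(1-x)^{k-j} ≤ 1/e + ε`. -/
theorem stmt_14 (ε : ℝ) (hε : 0 < ε) :
    ∃ K : ℕ, ∀ k : ℕ, K ≤ k → ∀ j : ℕ, 1 ≤ j → j ≤ k - 1 →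
      ∀ x : ℝ, 0 < x → x < 1 →
        (k.choose j : ℝ) * x ^ j * (1 - x) ^ (k - j) ≤ (Real.exp 1)⁻¹ + ε := by
  obtain ⟨N, hN⟩ := exists_nat_ge (1 / ε)
  refine ⟨max 12 (N + 2), fun k hk j hj1 hjk x hx0 hx1 => ?_⟩
  have hk12 : 12 ≤ k := le_trans (le_max_left _ _) hk
  have hkN : N + 2 ≤ k := le_trans (le_max_right _ _) hk
  obtain ⟨m, rfl⟩ : ∃ m, k = j + m := ⟨k - j, by omega⟩
  have hm1 : 1 ≤ m := by omega
  rw [Nat.add_sub_cancel_left]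
  have hC : (0:ℝ) ≤ ((j + m).choose j : ℝ) := by positivity
  have hinv1 : (Real.exp 1)⁻¹ ≤ 1 := by
    rw [inv_le_one_iff₀]
    right
    have := Real.exp_one_gt_d9
    linarith
  have hedge : ∀ n : ℕ, N + 1 ≤ n → (1:ℝ) / n ≤ ε := by
    intro n hn
    have hn0 : (0:ℝ) < n := by
      have : 0 < n := by omega
      exact_mod_cast this
    rw [div_le_iff₀ hn0]
    have hNn : (N:ℝ) ≤ n := by exact_mod_cast (by omega : N ≤ n)
    calc (1:ℝ) = ε * (1/ε) := by field_simp
      _ ≤ ε * N := mul_le_mul_of_nonneg_left hN hε.le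
      _ ≤ ε * n := mul_le_mul_of_nonneg_left hNn hε.le
  have step1 : ((j + m).choose j : ℝ) * x ^ j * (1 - x) ^ m ≤
      ((j + m).choose j : ℝ) * ((j : ℝ) / ((j : ℝ) + (m : ℝ))) ^ j *
        ((m : ℝ) / ((j : ℝ) + (m : ℝ))) ^ m := by
    rw [mul_assoc, mul_assoc]
    exact mul_le_mul_of_nonneg_left (amgm14 j m hj1 hm1 x hx0 hx1) hC
  refine step1.trans ?_
  by_cases hj2 : j = 1
  · subst hj2
    simp only [Nat.cast_one, pow_one, Nat.choose_one_right]
    push_cast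
    have hMp : (0:ℝ) < m := by exact_mod_cast hm1
    have e1 : ((1:ℝ) + (m:ℝ)) * (1 / (1 + (m:ℝ))) = 1 := by field_simp
    rw [e1, one_mul, add_comm (1:ℝ) (m:ℝ)]
    have hmN : N + 1 ≤ m := by omega
    calc ((m:ℝ) / ((m:ℝ) + 1)) ^ m ≤ (Real.exp 1)⁻¹ * (1 + 1 / (m:ℝ)) := edge14 m hm1
      _ = (Real.exp 1)⁻¹ + (Real.exp 1)⁻¹ * (1 / (m:ℝ)) := by ring
      _ ≤ (Real.exp 1)⁻¹ + ε := by
          have h1m : (1:ℝ) / m ≤ ε := hedge m hmN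
          have : (Real.exp 1)⁻¹ * (1 / (m:ℝ)) ≤ 1 * (1 / (m:ℝ)) :=
            mul_le_mul_of_nonneg_right hinv1 (by positivity)
          linarith
  · by_cases hm2 : m = 1
    · subst hm2
      simp only [Nat.cast_one, pow_one, Nat.choose_succ_self_right]
      push_cast
      have hJp : (0:ℝ) < j := by exact_mod_cast hj1
      have e1 : (((j:ℝ)) + 1) * (1 / ((j:ℝ) + 1)) = 1 := by field_simp
      rw [show ((j:ℝ) + 1) * ((j:ℝ) / ((j:ℝ) + 1)) ^ j * (1 / ((j:ℝ) + 1))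
          = ((j:ℝ) / ((j:ℝ) + 1)) ^ j * (((j:ℝ) + 1) * (1 / ((j:ℝ) + 1))) from by ring,
        e1, mul_one]
      have hjN : N + 1 ≤ j := by omega
      calc ((j:ℝ) / ((j:ℝ) + 1)) ^ j ≤ (Real.exp 1)⁻¹ * (1 + 1 / (j:ℝ)) := edge14 j hj1
        _ = (Real.exp 1)⁻¹ + (Real.exp 1)⁻¹ * (1 / (j:ℝ)) := by ring
        _ ≤ (Real.exp 1)⁻¹ + ε := by
            have h1j : (1:ℝ) / j ≤ ε := hedge j hjN
            have : (Real.exp 1)⁻¹ * (1 / (j:ℝ)) ≤ 1 * (1 / (j:ℝ)) :=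
              mul_le_mul_of_nonneg_right hinv1 (by positivity)
            linarith
    · have hj2' : 2 ≤ j := by omega
      have hm2' : 2 ≤ m := by omega
      exact (central14 j m hj2' hm2' (by omega)).trans (by linarith)
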